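/- Let m be an even positive integer and let f be a cyclic bent function on F_{2^{m−1}} × F_2. Let B_∞ be the standard basis of ℂ^{2^{m−1}} and, for a ∈ F_{2^{m−1}}, let B_a = { ( (ρ₀ (−1)^{f(ax,0)} + ρ₁ (−1)^{f(ax,1)}) (−1)^{Tr^{m−1}_1(λ x)} / √(2^{m−1}) )_{x ∈ F_{2^{m−1}}} : λ ∈ F_{2^{m−1}} } with ρ₀ = (1+i)/2, ρ₁ = (1−i)/2. Then C = B_∞ ∪ ⋃_{a ∈ F_{2^{m−1}}} B_a consists of N = 2^{2(m−1)} + 2^{m−1} pairwise distinct unit-norm vectors in ℂ^K with K = 2^{m−1}, and I_max(C) = 1/√(2^{m−1}) = √( (2N − K² − K) / ((N − K)(K + 1)) ); that is, C is a complex-valued (2^{2(m−1)}+2^{m−1}, 2^{m−1}) codebook meeting the complex Levenshtein bound with equality. -/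

import Mathlib

open Finset

noncomputable section

abbrev Fq (n : ℕ) := GaloisField 2 n

noncomputable instance (n : ℕ) : Fintype (Fq n) := Fintype.ofFinite _

/-- Absolute trace from `F_{2^n}` to `F_2`. -/
noncomputable def tr1 (n : ℕ) (x : Fq n) : ZMod 2 :=
  Algebra.trace (ZMod 2) (Fq n) x

/-- `(-1)^x` for `x : F_2`, as an integer. -/
def chi (x : ZMod 2) : ℤ := (-1 : ℤ) ^ x.val

/-- Walsh transform of a Boolean function on `F_{2^n} × F_2`. -/
noncomputable def walsh (n : ℕ) (f : Fq n × ZMod 2 → ZMod 2)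
    (lam : Fq n) (nu : ZMod 2) : ℤ :=
  ∑ x : Fq n × ZMod 2, chi (f x + tr1 n (lam * x.1) + nu * x.2)

/-- A Boolean function on `F_{2^{m-1}} × F_2` is bent if all its Walsh coefficients
are `± 2^(m/2)`. -/
def IsBent (m : ℕ) (f : Fq (m - 1) × ZMod 2 → ZMod 2) : Prop :=
  ∀ lam nu, walsh (m - 1) f lam nu = 2 ^ (m / 2) ∨ walsh (m - 1) f lam nu = -(2 ^ (m / 2))

/-- Cyclic bent function on `F_{2^{m-1}} × F_2`. -/
def IsCyclicBent (m : ℕ) (f : Fq (m - 1) × ZMod 2 → ZMod 2) : Prop :=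
  ∀ a b : Fq (m - 1), a ≠ b → ∀ ε : ZMod 2,
    IsBent m fun x => f (a * x.1, x.2) + f (b * x.1, x.2 + ε)

noncomputable instance (n : ℕ) : DecidableEq (Fq n) := Classical.decEq _

/-- The vector `v_{a,λ}` whose `x`-th coordinate is
`(ρ₀ (-1)^{f(ax,0)} + ρ₁ (-1)^{f(ax,1)}) (-1)^{Tr(λ x)} / √(2^{m-1})`,
where `ρ₀ = (1+i)/2` and `ρ₁ = (1-i)/2`. -/
noncomputable def mubVec (m : ℕ) (f : Fq (m - 1) × ZMod 2 → ZMod 2)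
    (a lam : Fq (m - 1)) : EuclideanSpace ℂ (Fq (m - 1)) :=
  WithLp.toLp 2 fun x =>
    (((1 + Complex.I) / 2) * (-1 : ℂ) ^ (f (a * x, 0)).val
      + ((1 - Complex.I) / 2) * (-1 : ℂ) ^ (f (a * x, 1)).val)
    * (-1 : ℂ) ^ (tr1 (m - 1) (lam * x)).val / Real.sqrt (2 ^ (m - 1))

/-- The codebook `C = B_∞ ∪ ⋃_{a ∈ F_{2^{m-1}}} B_a`. -/
noncomputable def codebookMUB (m : ℕ) (f : Fq (m - 1) × ZMod 2 → ZMod 2) :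
    Set (EuclideanSpace ℂ (Fq (m - 1))) :=
  (Set.range fun y : Fq (m - 1) => EuclideanSpace.single y (1 : ℂ))
    ∪ ⋃ a : Fq (m - 1), Set.range fun lam : Fq (m - 1) => mubVec m f a lam

noncomputable def cz (v : ZMod 2) : ℂ := (-1 : ℂ) ^ v.val

lemma zmod2_cases (v : ZMod 2) : v = 0 ∨ v = 1 := by revert v; decide

lemma cz_zero : cz 0 = 1 := rfl
lemma cz_one : cz 1 = -1 := by
  unfold cz; rw [ZMod.val_one]; ring

lemma cz_add (u v : ZMod 2) : cz (u + v) = cz u * cz v := by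
  rcases zmod2_cases u with h | h <;> rcases zmod2_cases v with h' | h' <;>
    subst h <;> subst h' <;>
    simp [cz_zero, cz_one, show (1:ZMod 2)+1 = 0 from rfl]

lemma cz_add_one (u : ZMod 2) : cz (u + 1) = - cz u := by rw [cz_add, cz_one]; ring
lemma zmod2_self_add (u : ZMod 2) : u + u = 0 := by
  rcases zmod2_cases u with h|h <;> subst h <;> decide
lemma conj_cz (u : ZMod 2) : (starRingEnd ℂ) (cz u) = cz u := by
  unfold cz; rw [map_pow, map_neg, map_one]
lemma cz_chi (u : ZMod 2) : ((chi u : ℤ) : ℂ) = cz u := by push_cast [chi, cz]; ring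

/-- The key pointwise product identity. -/
lemma key_pointwise (u0 u1 v0 v1 : ZMod 2) :
    (starRingEnd ℂ) (((1 + Complex.I) / 2) * (-1 : ℂ) ^ u0.val
        + ((1 - Complex.I) / 2) * (-1 : ℂ) ^ u1.val)
      * (((1 + Complex.I) / 2) * (-1 : ℂ) ^ v0.val
        + ((1 - Complex.I) / 2) * (-1 : ℂ) ^ v1.val)
    = (cz (u0 + v0) + cz (u1 + v1)) / 2
      + Complex.I * (cz (u1 + v0) - cz (u0 + v1)) / 2 := by
  rw [map_add, map_mul, map_mul, map_div₀, map_div₀, map_add, map_sub, map_one,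
    Complex.conj_I, map_pow, map_pow, map_neg, map_one, map_ofNat,
    cz_add, cz_add, cz_add, cz_add]
  unfold cz
  set A0 := (-1 : ℂ) ^ u0.val
  set A1 := (-1 : ℂ) ^ u1.val
  set B0 := (-1 : ℂ) ^ v0.val
  set B1 := (-1 : ℂ) ^ v1.val
  linear_combination ((A0*B1 + A1*B0 - A0*B0 - A1*B1)/4) * Complex.I_sq

lemma tr1_add (n : ℕ) (u v : Fq n) : tr1 n (u + v) = tr1 n u + tr1 n v := map_add _ u v

lemma exists_tr_one (n : ℕ) (c : Fq n) (hc : c ≠ 0) : ∃ x, tr1 n (c * x) = 1 := by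
  have htr := (traceForm_nondegenerate (ZMod 2) (Fq n)).1 c
  simp_rw [Algebra.traceForm_apply] at htr
  by_contra! hfa
  exact hc (htr fun y => (show ∀ t : ZMod 2, t ≠ 1 → t = 0 by decide) _ (hfa y))

lemma charSum_zero (n : ℕ) (c : Fq n) (hc : c ≠ 0) :
    ∑ x : Fq n, cz (tr1 n (c * x)) = 0 := by
  obtain ⟨x₀, hx₀⟩ := exists_tr_one n c hc
  have h1 : ∑ x : Fq n, cz (tr1 n (c * (x + x₀))) = ∑ x : Fq n, cz (tr1 n (c * x)) :=
    Fintype.sum_equiv (Equiv.addRight x₀) _ _ (fun x => rfl)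
  have h2 : ∀ x : Fq n, cz (tr1 n (c * (x + x₀))) = - cz (tr1 n (c * x)) := by
    intro x; rw [mul_add, tr1_add, hx₀, cz_add_one]
  rw [Finset.sum_congr rfl (fun x _ => h2 x), Finset.sum_neg_distrib] at h1
  have h3 : (2 : ℂ) * ∑ x : Fq n, cz (tr1 n (c * x)) = 0 := by linear_combination -h1
  exact (mul_eq_zero.mp h3).resolve_left two_ne_zero

lemma charSum (n : ℕ) (hn : n ≠ 0) (c : Fq n) :
    ∑ x : Fq n, cz (tr1 n (c * x)) = if c = 0 then (2 ^ n : ℂ) else 0 := by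
  split_ifs with h
  · subst h
    simp only [zero_mul, show tr1 n 0 = 0 from map_zero _, cz_zero]
    rw [Finset.sum_const, Finset.card_univ,
      show Fintype.card (Fq n) = 2 ^ n by rw [← Nat.card_eq_fintype_card]; exact GaloisField.card 2 n hn]
    push_cast; ring
  · exact charSum_zero n c h

lemma sum_zmod2 {M : Type*} [AddCommMonoid M] (g : ZMod 2 → M) :
    ∑ x : ZMod 2, g x = g 0 + g 1 := by
  rw [show (Finset.univ : Finset (ZMod 2)) = {0, 1} from rfl]
  rw [Finset.sum_insert (by decide), Finset.sum_singleton]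

/-- Walsh transform as a ℂ-valued sum over the first coordinate. -/
lemma walsh_expand (n : ℕ) (h : Fq n × ZMod 2 → ZMod 2) (c : Fq n) (nu : ZMod 2) :
    ((walsh n h c nu : ℤ) : ℂ)
      = ∑ x : Fq n, (cz (h (x, 0) + tr1 n (c * x))
          + cz (h (x, 1) + tr1 n (c * x) + nu)) := by
  unfold walsh
  rw [Fintype.sum_prod_type]
  push_cast [chi]
  refine Finset.sum_congr rfl fun x _ => ?_
  rw [sum_zmod2 (fun x₂ => ((-1 : ℂ)) ^ (h (x, x₂) + tr1 n (c * x) + nu * x₂).val)]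
  simp only [mul_zero, mul_one, add_zero]
  rfl

lemma sqrtK_sq (k : ℕ) :
    ((Real.sqrt (2 ^ k) : ℝ) : ℂ) * ((Real.sqrt (2 ^ k) : ℝ) : ℂ) = (2 : ℂ) ^ k := by
  rw [← Complex.ofReal_mul, Real.mul_self_sqrt (by positivity)]
  push_cast; ring

lemma sqrtK_ne (k : ℕ) : ((Real.sqrt (2 ^ k) : ℝ) : ℂ) ≠ 0 := by
  simp only [ne_eq, Complex.ofReal_eq_zero]
  positivity

lemma mub_pointwise (m : ℕ) (f : Fq (m - 1) × ZMod 2 → ZMod 2)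
    (a b lam mu : Fq (m - 1)) (x : Fq (m - 1)) :
    (starRingEnd ℂ) (mubVec m f a lam x) * mubVec m f b mu x * (2 : ℂ) ^ (m - 1)
    = (cz (f (a * x, 0) + f (b * x, 0) + tr1 (m - 1) ((lam + mu) * x))
        + cz (f (a * x, 1) + f (b * x, 1) + tr1 (m - 1) ((lam + mu) * x))) / 2
      + Complex.I * (cz (f (a * x, 1) + f (b * x, 0) + tr1 (m - 1) ((lam + mu) * x))
        - cz (f (a * x, 0) + f (b * x, 1) + tr1 (m - 1) ((lam + mu) * x))) / 2 := by
  unfold mubVec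
  simp only [PiLp.toLp_apply]
  rw [map_div₀, map_mul, Complex.conj_ofReal]
  rw [show (starRingEnd ℂ) ((-1 : ℂ) ^ (tr1 (m-1) (lam * x)).val) = cz (tr1 (m-1) (lam*x)) from conj_cz _]
  rw [div_mul_div_comm]
  rw [show ((-1 : ℂ) ^ (tr1 (m-1) (mu * x)).val) = cz (tr1 (m-1) (mu*x)) from rfl]
  rw [mul_mul_mul_comm, key_pointwise, ← cz_add]
  rw [show tr1 (m-1) (lam*x) + tr1 (m-1) (mu*x) = tr1 (m-1) ((lam+mu)*x) by
    rw [add_mul, tr1_add]]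
  rw [sqrtK_sq, div_mul_cancel₀ _ (pow_ne_zero _ (two_ne_zero : (2:ℂ) ≠ 0))]
  simp only [cz_add]
  ring

lemma inner_mub (m : ℕ) (f : Fq (m - 1) × ZMod 2 → ZMod 2) (a b lam mu : Fq (m - 1)) :
    (inner (𝕜 := ℂ) (mubVec m f a lam) (mubVec m f b mu)) * (2 ^ (m - 1) * 2)
    = (∑ x : Fq (m - 1), (cz (f (a * x, 0) + f (b * x, 0) + tr1 (m - 1) ((lam + mu) * x))
          + cz (f (a * x, 1) + f (b * x, 1) + tr1 (m - 1) ((lam + mu) * x))))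
      + Complex.I * (∑ x : Fq (m - 1),
          (cz (f (a * x, 1) + f (b * x, 0) + tr1 (m - 1) ((lam + mu) * x))
            - cz (f (a * x, 0) + f (b * x, 1) + tr1 (m - 1) ((lam + mu) * x)))) := by
  rw [PiLp.inner_apply]
  simp only [RCLike.inner_apply]
  simp only [mul_comm _ ((starRingEnd ℂ) _)]
  rw [Finset.sum_mul]
  have h : ∀ x ∈ (Finset.univ : Finset (Fq (m - 1))),
      (starRingEnd ℂ) (mubVec m f a lam x) * mubVec m f b mu x * (2 ^ (m - 1) * 2)
      = (cz (f (a * x, 0) + f (b * x, 0) + tr1 (m - 1) ((lam + mu) * x))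
          + cz (f (a * x, 1) + f (b * x, 1) + tr1 (m - 1) ((lam + mu) * x)))
        + Complex.I * (cz (f (a * x, 1) + f (b * x, 0) + tr1 (m - 1) ((lam + mu) * x))
          - cz (f (a * x, 0) + f (b * x, 1) + tr1 (m - 1) ((lam + mu) * x))) := by
    intro x _
    rw [← mul_assoc, mub_pointwise]
    ring
  rw [Finset.sum_congr rfl h, Finset.sum_add_distrib, ← Finset.mul_sum]

lemma fq_add_self (n : ℕ) (u : Fq n) : u + u = 0 := by
  have : CharP (Fq n) 2 := inferInstance
  exact CharTwo.add_self_eq_zero u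

lemma fq_add_eq_zero_iff (n : ℕ) (u v : Fq n) : u + v = 0 ↔ u = v := by
  have : CharP (Fq n) 2 := inferInstance
  constructor
  · intro h
    have h2 : u + v + v = v := by rw [h, zero_add]
    rwa [add_assoc, CharTwo.add_self_eq_zero, add_zero] at h2
  · intro h; rw [h]; exact CharTwo.add_self_eq_zero v

lemma inner_mub_same (m : ℕ) (hm1 : m - 1 ≠ 0) (f : Fq (m - 1) × ZMod 2 → ZMod 2)
    (a lam mu : Fq (m - 1)) :
    (inner (𝕜 := ℂ) (mubVec m f a lam) (mubVec m f a mu))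
      = if lam = mu then 1 else 0 := by
  have h := inner_mub m f a a lam mu
  have e1 : ∀ x : Fq (m - 1), ∀ u : ZMod 2,
      f (a * x, u) + f (a * x, u) + tr1 (m - 1) ((lam + mu) * x)
        = tr1 (m - 1) ((lam + mu) * x) := by
    intro x u; rw [zmod2_self_add, zero_add]
  have e2 : ∀ x : Fq (m - 1),
      cz (f (a * x, 1) + f (a * x, 0) + tr1 (m - 1) ((lam + mu) * x))
        - cz (f (a * x, 0) + f (a * x, 1) + tr1 (m - 1) ((lam + mu) * x)) = 0 := by
    intro x; rw [add_comm (f (a * x, 1)) (f (a * x, 0))]; ring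
  rw [Finset.sum_congr rfl (fun x _ => by rw [e1 x 0, e1 x 1, ← two_mul]),
      Finset.sum_congr rfl (fun x _ => e2 x), Finset.sum_const, smul_zero, mul_zero, add_zero,
      ← Finset.mul_sum, charSum (m-1) hm1] at h
  have hKne : ((2 : ℂ) ^ (m - 1) * 2) ≠ 0 := by
    exact mul_ne_zero (pow_ne_zero _ two_ne_zero) two_ne_zero
  split_ifs with hlm
  · subst hlm
    rw [if_pos (fq_add_self _ lam)] at h
    refine mul_right_cancel₀ hKne ?_
    rw [h]; ring
  · rw [if_neg (fun hc => hlm ((fq_add_eq_zero_iff _ _ _).mp hc))] at h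
    rw [mul_zero] at h
    exact (mul_eq_zero.mp h).resolve_right hKne

lemma abs_add_I_mul (x y : ℝ) :
    ‖(x : ℂ) + Complex.I * (y : ℂ)‖ = Real.sqrt (x ^ 2 + y ^ 2) := by
  rw [Complex.norm_def]
  congr 1
  simp [Complex.normSq_apply]
  ring

lemma abs_inner_mub_ne (m : ℕ) (hm : Even m) (hm0 : 0 < m)
    (f : Fq (m - 1) × ZMod 2 → ZMod 2) (hf : IsCyclicBent m f)
    (a b lam mu : Fq (m - 1)) (hab : a ≠ b) :
    ‖inner (𝕜 := ℂ) (mubVec m f a lam) (mubVec m f b mu)‖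
      = 1 / Real.sqrt (2 ^ (m - 1)) := by
  have h := inner_mub m f a b lam mu
  set c := lam + mu with hc
  have h0 := walsh_expand (m - 1) (fun x => f (a * x.1, x.2) + f (b * x.1, x.2 + 0)) c 0
  simp only [add_zero] at h0
  have h1 := walsh_expand (m - 1) (fun x => f (a * x.1, x.2) + f (b * x.1, x.2 + 1)) c 1
  simp only [zero_add, show (1 : ZMod 2) + 1 = 0 from rfl] at h1
  set W₀ := walsh (m - 1) (fun x => f (a * x.1, x.2) + f (b * x.1, x.2)) c 0 with hW0def
  set W₁ := walsh (m - 1) (fun x => f (a * x.1, x.2) + f (b * x.1, x.2 + 1)) c 1 with hW1def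
  have h1' : ((W₁ : ℤ) : ℂ) = ∑ x : Fq (m - 1),
      (cz (f (a * x, 0) + f (b * x, 1) + tr1 (m - 1) (c * x))
        - cz (f (a * x, 1) + f (b * x, 0) + tr1 (m - 1) (c * x))) := by
    rw [h1]
    exact Finset.sum_congr rfl fun x _ => by rw [cz_add_one]; ring
  have hsum2 : (∑ x : Fq (m - 1),
      (cz (f (a * x, 1) + f (b * x, 0) + tr1 (m - 1) (c * x))
        - cz (f (a * x, 0) + f (b * x, 1) + tr1 (m - 1) (c * x)))) = -((W₁ : ℤ) : ℂ) := by
    rw [h1', ← Finset.sum_neg_distrib]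
    exact Finset.sum_congr rfl fun x _ => by ring
  rw [hsum2, ← h0] at h
  -- bent values
  have hb0 := hf a b hab 0 c 0
  simp only [add_zero] at hb0
  have hb1 := hf a b hab 1 c 1
  have hmm : m / 2 * 2 = m := Nat.div_mul_cancel hm.two_dvd
  have base : ((2:ℝ) ^ (m / 2)) ^ 2 = 2 ^ m := by rw [← pow_mul, hmm]
  have hWsq : ∀ W : ℤ, (W = 2 ^ (m / 2) ∨ W = -(2 ^ (m / 2))) → ((W : ℝ)) ^ 2 = 2 ^ m := by
    intro W hW
    rcases hW with hW | hW <;> rw [hW] <;> push_cast <;> linear_combination base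
  have hW0sq : ((W₀ : ℝ)) ^ 2 = 2 ^ m := hWsq _ hb0
  have hW1sq : ((W₁ : ℝ)) ^ 2 = 2 ^ m := hWsq _ hb1
  -- take absolute values
  have habs : ‖inner (𝕜 := ℂ) (mubVec m f a lam) (mubVec m f b mu)‖
      * ((2 : ℝ) ^ (m - 1) * 2) = Real.sqrt ((2 : ℝ) ^ (m + 1)) := by
    have h2 := congrArg (‖·‖) h
    rw [norm_mul] at h2
    rw [show ‖(2 : ℂ) ^ (m - 1) * 2‖ = ((2 : ℝ) ^ (m - 1) * 2) by
      rw [norm_mul, norm_pow]; norm_num] at h2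
    rw [h2]
    rw [show ((W₀ : ℤ) : ℂ) + Complex.I * -((W₁ : ℤ) : ℂ)
        = (((W₀ : ℝ) : ℂ)) + Complex.I * ((((-W₁ : ℤ) : ℝ) : ℂ)) by push_cast; ring]
    rw [abs_add_I_mul]
    congr 1
    rw [show (((-W₁ : ℤ) : ℝ)) ^ 2 = ((W₁ : ℝ)) ^ 2 by push_cast; ring, hW0sq, hW1sq, pow_succ]
    ring
  have hs : Real.sqrt ((2:ℝ) ^ (m + 1)) = 2 * Real.sqrt (2 ^ (m - 1)) := by
    have e : (2:ℝ) ^ (m + 1) = (2 * Real.sqrt (2 ^ (m - 1))) ^ 2 := by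
      rw [mul_pow, Real.sq_sqrt (by positivity : (0:ℝ) ≤ 2 ^ (m - 1)), ← pow_add]
      congr 1
      omega
    rw [e, Real.sqrt_sq (by positivity)]
  have hpos : (0:ℝ) < (2 : ℝ) ^ (m - 1) * 2 := by positivity
  refine mul_right_cancel₀ (ne_of_gt hpos) ?_
  rw [habs, hs]
  have hsne : Real.sqrt ((2:ℝ) ^ (m - 1)) ≠ 0 := by positivity
  field_simp
  rw [Real.sq_sqrt (by positivity : (0:ℝ) ≤ 2 ^ (m - 1))]

lemma norm_mub (m : ℕ) (hm1 : m - 1 ≠ 0) (f : Fq (m - 1) × ZMod 2 → ZMod 2)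
    (a lam : Fq (m - 1)) : ‖mubVec m f a lam‖ = 1 := by
  have h := inner_mub_same m hm1 f a lam lam
  rw [if_pos rfl] at h
  rw [inner_self_eq_norm_sq_to_K] at h
  have h3 : ‖mubVec m f a lam‖ ^ 2 = 1 := by
    have h4 : ((‖mubVec m f a lam‖ ^ 2 : ℝ) : ℂ) = ((1 : ℝ) : ℂ) := by
      push_cast
      rw [← h]
      norm_num
    exact Complex.ofReal_injective h4
  nlinarith [norm_nonneg (mubVec m f a lam)]

lemma abs_mub_coord (m : ℕ) (f : Fq (m - 1) × ZMod 2 → ZMod 2)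
    (a lam : Fq (m - 1)) (x : Fq (m - 1)) :
    ‖mubVec m f a lam x‖ = 1 / Real.sqrt (2 ^ (m - 1)) := by
  have hG : ‖((1 + Complex.I) / 2) * (-1 : ℂ) ^ (f (a * x, 0)).val
      + ((1 - Complex.I) / 2) * (-1 : ℂ) ^ (f (a * x, 1)).val‖ = 1 := by
    set G := ((1 + Complex.I) / 2) * (-1 : ℂ) ^ (f (a * x, 0)).val
      + ((1 - Complex.I) / 2) * (-1 : ℂ) ^ (f (a * x, 1)).val with hGdef
    have hk := key_pointwise (f (a * x, 0)) (f (a * x, 1)) (f (a * x, 0)) (f (a * x, 1))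
    rw [← hGdef, zmod2_self_add, zmod2_self_add, cz_zero] at hk
    have hns : ((Complex.normSq G : ℝ) : ℂ) = 1 := by
      rw [Complex.normSq_eq_conj_mul_self, hk]
      rw [add_comm (f (a*x,1)) (f (a*x,0))]
      ring
    have : Complex.normSq G = 1 := by exact_mod_cast hns
    rw [Complex.norm_def, this, Real.sqrt_one]
  unfold mubVec
  simp only [PiLp.toLp_apply]
  rw [norm_div, norm_mul, hG]
  rw [show ‖(-1 : ℂ) ^ (tr1 (m-1) (lam * x)).val‖ = 1 by rw [norm_pow]; simp]
  rw [Complex.norm_of_nonneg (Real.sqrt_nonneg _)]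
  try rw [one_mul]
  try ring

lemma abs_inner_single_mub (m : ℕ) (f : Fq (m - 1) × ZMod 2 → ZMod 2)
    (y a lam : Fq (m - 1)) :
    ‖inner (𝕜 := ℂ) (EuclideanSpace.single y (1 : ℂ)) (mubVec m f a lam)‖
      = 1 / Real.sqrt (2 ^ (m - 1)) := by
  rw [EuclideanSpace.inner_single_left, map_one, one_mul, abs_mub_coord]

lemma inner_single_single (m : ℕ) (y y' : Fq (m - 1)) :
    (inner (𝕜 := ℂ) (EuclideanSpace.single y (1 : ℂ)) (EuclideanSpace.single y' (1 : ℂ)))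
      = if y = y' then 1 else 0 := by
  rw [EuclideanSpace.inner_single_left, map_one, one_mul, EuclideanSpace.single_apply]

section Assembly

variable (m : ℕ) (f : Fq (m - 1) × ZMod 2 → ZMod 2)

/-- Index map for the codebook. -/
noncomputable def cbF : (Fq (m - 1) ⊕ (Fq (m - 1) × Fq (m - 1))) → EuclideanSpace ℂ (Fq (m - 1)) :=
  Sum.elim (fun y => EuclideanSpace.single y (1 : ℂ)) (fun p => mubVec m f p.1 p.2)

lemma cbF_range : Set.range (cbF m f) = codebookMUB m f := by
  unfold cbF codebookMUB
  ext z
  simp only [Set.mem_union, Set.mem_range, Set.mem_iUnion, Sum.exists, Sum.elim_inl,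
    Sum.elim_inr, Prod.exists]

lemma cbF_norm (hm1 : m - 1 ≠ 0) (i : Fq (m - 1) ⊕ (Fq (m - 1) × Fq (m - 1))) :
    ‖cbF m f i‖ = 1 := by
  rcases i with y | ⟨a, lam⟩
  · simp [cbF, EuclideanSpace.norm_single]
  · exact norm_mub m hm1 f a lam

lemma cbF_inner_le (hm : Even m) (hm0 : 0 < m) (hf : IsCyclicBent m f)
    (i j : Fq (m - 1) ⊕ (Fq (m - 1) × Fq (m - 1))) (hij : i ≠ j) :
    ‖inner (𝕜 := ℂ) (cbF m f i) (cbF m f j)‖ ≤ 1 / Real.sqrt (2 ^ (m - 1)) := by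
  have hm1 : m - 1 ≠ 0 := by
    rcases hm with ⟨k, hk⟩; omega
  have hbpos : (0:ℝ) ≤ 1 / Real.sqrt (2 ^ (m - 1)) := by positivity
  rcases i with y | ⟨a, lam⟩ <;> rcases j with y' | ⟨b, mu⟩
  · have hyy : y ≠ y' := fun h => hij (by rw [h])
    simp only [cbF, Sum.elim_inl]
    rw [inner_single_single m y y', if_neg hyy]
    simpa using hbpos
  · simp only [cbF, Sum.elim_inl, Sum.elim_inr]
    rw [abs_inner_single_mub]
  · simp only [cbF, Sum.elim_inl, Sum.elim_inr]
    rw [← inner_conj_symm, Complex.norm_conj]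
    rw [abs_inner_single_mub]
  · simp only [cbF, Sum.elim_inr]
    by_cases hab : a = b
    · subst hab
      have hlm : lam ≠ mu := fun h => hij (by rw [h])
      rw [inner_mub_same m hm1 f a lam mu, if_neg hlm]
      simpa using hbpos
    · rw [abs_inner_mub_ne m hm hm0 f hf a b lam mu hab]

lemma cbF_inj (hm : Even m) (hm0 : 0 < m) (hf : IsCyclicBent m f) :
    Function.Injective (cbF m f) := by
  have hm1 : m - 1 ≠ 0 := by rcases hm with ⟨k, hk⟩; omega
  intro i j hij
  by_contra hne
  have h1 := cbF_inner_le m f hm hm0 hf i j hne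
  rw [hij, inner_self_eq_norm_sq_to_K, cbF_norm m f hm1 j] at h1
  have hlt : 1 / Real.sqrt (2 ^ (m - 1)) < 1 := by
    rw [div_lt_one (by positivity)]
    have : (2:ℝ) ^ 1 ≤ 2 ^ (m - 1) := by
      apply pow_le_pow_right₀ (by norm_num)
      omega
    nlinarith [Real.sq_sqrt (show (0:ℝ) ≤ 2 ^ (m-1) by positivity),
      Real.sqrt_nonneg ((2:ℝ) ^ (m-1))]
  rw [one_div] at hlt
  simp at h1
  linarith

end Assembly

/-- the codebook obtained from the complete set of MUBs is an optimal
complex `(2^{2(m-1)}+2^{m-1}, 2^{m-1})` codebook meeting the complex Levenshtein bound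
with equality. -/
theorem stmt7 (m : ℕ) (hm : Even m) (hm0 : 0 < m)
    (f : Fq (m - 1) × ZMod 2 → ZMod 2) (hf : IsCyclicBent m f) :
    (codebookMUB m f).ncard = 2 ^ (2 * (m - 1)) + 2 ^ (m - 1) ∧
    (∀ c ∈ codebookMUB m f, ‖c‖ = 1) ∧
    (∀ c ∈ codebookMUB m f, ∀ c' ∈ codebookMUB m f, c ≠ c' →
      ‖(@inner ℂ _ _ c c')‖ ≤ 1 / Real.sqrt (2 ^ (m - 1))) ∧
    (∃ c ∈ codebookMUB m f, ∃ c' ∈ codebookMUB m f, c ≠ c' ∧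
      ‖(@inner ℂ _ _ c c')‖ = 1 / Real.sqrt (2 ^ (m - 1))) ∧
    1 / Real.sqrt (2 ^ (m - 1))
      = Real.sqrt
          ((2 * (2 ^ (2 * (m - 1)) + 2 ^ (m - 1) : ℝ)
              - (2 ^ (m - 1) : ℝ) ^ 2 - 2 ^ (m - 1))
            / (((2 ^ (2 * (m - 1)) + 2 ^ (m - 1) : ℝ) - 2 ^ (m - 1))
                * (2 ^ (m - 1) + 1))) := by
  have hm1 : m - 1 ≠ 0 := by rcases hm with ⟨k, hk⟩; omega
  have hrange := cbF_range m f
  have hinj := cbF_inj m f hm hm0 hf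
  refine ⟨?_, ?_, ?_, ?_, ?_⟩
  · rw [← hrange, ← Nat.card_coe_set_eq, Nat.card_range_of_injective hinj,
      Nat.card_sum, Nat.card_prod,
      show Nat.card (Fq (m - 1)) = 2 ^ (m - 1) from GaloisField.card 2 (m - 1) hm1,
      two_mul, pow_add]
    ring
  · intro c hc
    rw [← hrange] at hc
    obtain ⟨i, rfl⟩ := hc
    exact cbF_norm m f hm1 i
  · intro c hc c' hc' hne
    rw [← hrange] at hc hc'
    obtain ⟨i, rfl⟩ := hc
    obtain ⟨j, rfl⟩ := hc'
    exact cbF_inner_le m f hm hm0 hf i j (fun h => hne (by rw [h]))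
  · refine ⟨EuclideanSpace.single 0 1, ?_, mubVec m f 0 0, ?_, ?_, ?_⟩
    · rw [← hrange]; exact ⟨Sum.inl 0, rfl⟩
    · rw [← hrange]; exact ⟨Sum.inr (0, 0), rfl⟩
    · intro h
      have h2 : (Sum.inl (0 : Fq (m - 1)) : Fq (m - 1) ⊕ (Fq (m - 1) × Fq (m - 1)))
          = Sum.inr ((0 : Fq (m - 1)), (0 : Fq (m - 1))) := hinj h
      simp at h2
    · exact abs_inner_single_mub m f 0 0 0
  · set K := (2:ℝ) ^ (m - 1) with hKdef
    have hK0 : (0:ℝ) < K := by positivity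
    have h2 : (2:ℝ) ^ (2 * (m - 1)) = K ^ 2 := by rw [mul_comm, pow_mul]
    rw [h2]
    have hfrac : (2 * (K ^ 2 + K) - K ^ 2 - K) / ((K ^ 2 + K - K) * (K + 1)) = 1 / K := by
      rw [div_eq_div_iff (by nlinarith) (by nlinarith)]
      ring
    rw [hfrac, one_div, one_div, Real.sqrt_inv]
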